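/- Let φ ∈ L²(ℝ) be a scale-2 father function: the translates {φ(·−k) : k ∈ ℤ} are orthonormal; with V_0 the closed linear span of these translates and (Uξ)(x) = 2^{−1/2} ξ(x/2) the scaling unitary on L²(ℝ), one has Uφ ∈ V_0, ⋂_{n∈ℤ} U^n V_0 = {0}, and ⋃_{n∈ℤ} U^n V_0 is dense in L²(ℝ). Let m_0 ∈ L²(𝕋) be the low-pass filter determined by √2 φ̂(2t) = m_0(e^{−it}) φ̂(t) (a.e. t ∈ ℝ), where φ̂ is the Fourier transform φ̂(t) = (2π)^{−1/2} ∫ e^{−ixt} φ(x) dx, and let S_0 on L²(𝕋) be (S_0 ξ)(z) = m_0(z) ξ(z²). Let M_φ̂ : L²(𝕋) → L²(ℝ) be the isometry (M_φ̂ ξ)(t) = φ̂(t) ξ(e^{−it}), and let F denote the Plancherel Fourier transform, a unitary of L²(ℝ). Then S_0 is a compression of the scaling operator U in the sense that S_0 = M_φ̂* F U F^{−1} M_φ̂. -/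

import Mathlib

open MeasureTheory Real
open scoped ENNReal NNReal ComplexInnerProductSpace

noncomputable section

instance : Fact (0 < 2 * Real.pi) := ⟨by positivity⟩

/-- The circle `𝕋 = ℝ/2πℤ`, written additively; the point `(t : 𝕋)` corresponds to `e^{-it}`
and `2 • z` corresponds to `z ↦ z²`. -/
abbrev Circle2π : Type := AddCircle (2 * Real.pi)

/-- Normalized Haar (probability) measure on the circle. -/
abbrev haarT : Measure Circle2π := AddCircle.haarAddCircle

/-- `L²(𝕋)`. -/
abbrev HT : Type := Lp ℂ 2 haarT

/-- `L²(ℝ)`. -/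
abbrev L2R : Type := Lp ℂ 2 (volume : Measure ℝ)

/-- The closed linear span `V₀` of the translates `φ(· - k)`. -/
def spanTranslates (φL : ℤ → L2R) : Submodule ℂ L2R :=
  (Submodule.span ℂ (Set.range φL)).topologicalClosure

/-- The subspace `Vₙ = Uⁿ V₀`. -/
def dilSubspace (U : L2R ≃ₗᵢ[ℂ] L2R) (V : Submodule ℂ L2R) (n : ℤ) : Submodule ℂ L2R :=
  V.map ((U ^ n).toLinearEquiv : L2R →ₗ[ℂ] L2R)

namespace WaveAux

lemma two_pi_pos' : (0:ℝ) < 2 * π := by positivity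

/-- The dilation `t ↦ 2t` is quasi measure preserving on `ℝ`. -/
lemma qmp_two : Measure.QuasiMeasurePreserving (fun t : ℝ => 2 * t) volume volume :=
  ⟨measurable_const_mul 2, by
    rw [show (fun t : ℝ => 2 * t) = ((2:ℝ) * ·) from rfl,
      Real.map_volume_mul_left (two_ne_zero)]
    exact Measure.smul_absolutelyContinuous⟩

lemma measurable_mk : Measurable ((↑) : ℝ → Circle2π) := AddCircle.measurable_mk'

lemma exists_k (x : ℝ) :
    ∃ k : ℤ, x ∈ Set.Ioc ((k:ℝ) * (2*π)) ((k:ℝ) * (2*π) + 2*π) := by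
  have hT : (0:ℝ) < 2*π := two_pi_pos'
  refine ⟨⌈x / (2*π)⌉ - 1, ?_, ?_⟩
  · have h1 : ((⌈x/(2*π)⌉ - 1 : ℤ) : ℝ) < x/(2*π) := by
      push_cast; linarith [Int.ceil_lt_add_one (x/(2*π))]
    have := mul_lt_mul_of_pos_right h1 hT
    rwa [div_mul_cancel₀ _ hT.ne'] at this
  · have h2 : x/(2*π) ≤ ((⌈x/(2*π)⌉ : ℤ) : ℝ) := Int.le_ceil _
    have := mul_le_mul_of_nonneg_right h2 hT.le
    rw [div_mul_cancel₀ _ hT.ne'] at this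
    push_cast
    linarith

/-- The canonical projection `ℝ → 𝕋` is quasi measure preserving (w.r.t. Haar measure). -/
lemma qmp_mk : Measure.QuasiMeasurePreserving ((↑) : ℝ → Circle2π) volume haarT := by
  refine ⟨measurable_mk, Measure.AbsolutelyContinuous.mk fun s hs h0 => ?_⟩
  rw [Measure.map_apply measurable_mk hs]
  have hvol : (volume : Measure Circle2π) s = 0 := by
    rw [AddCircle.volume_eq_smul_haarAddCircle]
    simp [h0]
  have hsub : ((↑) : ℝ → Circle2π) ⁻¹' s ⊆
      ⋃ k : ℤ, (((↑) : ℝ → Circle2π) ⁻¹' s ∩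
        Set.Ioc ((k:ℝ) * (2*π)) ((k:ℝ) * (2*π) + 2*π)) := by
    intro x hx
    obtain ⟨k, hk⟩ := exists_k x
    exact Set.mem_iUnion.2 ⟨k, hx, hk⟩
  refine measure_mono_null hsub (measure_iUnion_null fun k => ?_)
  have hmp := (AddCircle.measurePreserving_mk (2*π) ((k:ℝ) * (2*π))).measure_preimage
    (hs.nullMeasurableSet)
  rw [← Measure.restrict_apply' measurableSet_Ioc, hmp, hvol]

/-- Membership in `L²(ℝ)` of the dilated function. -/
lemma memLp_dil (g : L2R) :
    MemLp (fun t : ℝ => ((Real.sqrt 2 : ℝ) : ℂ) * g (2 * t)) 2 volume := by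
  have hme : MeasurableEmbedding (fun t : ℝ => 2 * t) :=
    (Homeomorph.mulLeft₀ (2:ℝ) two_ne_zero).measurableEmbedding
  have h1 : MemLp (⇑g) 2 (Measure.map (fun t : ℝ => 2 * t) volume) := by
    rw [show (fun t : ℝ => 2 * t) = ((2:ℝ) * ·) from rfl,
      Real.map_volume_mul_left two_ne_zero]
    exact (Lp.memLp g).smul_measure (by finiteness)
  have h2 : MemLp (⇑g ∘ fun t : ℝ => 2 * t) 2 volume := hme.memLp_map_measure_iff.mp h1
  exact h2.const_mul _

lemma eLpNorm_dil_le (g : L2R) :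
    eLpNorm (fun t : ℝ => ((Real.sqrt 2 : ℝ) : ℂ) * g (2 * t)) 2 volume ≤
      (‖((Real.sqrt 2 : ℝ) : ℂ)‖₊ : ℝ≥0∞) * eLpNorm (⇑g) 2 volume := by
  have hme : MeasurableEmbedding (fun t : ℝ => 2 * t) :=
    (Homeomorph.mulLeft₀ (2:ℝ) two_ne_zero).measurableEmbedding
  have h1 : eLpNorm (fun t : ℝ => g (2 * t)) 2 volume ≤ eLpNorm (⇑g) 2 volume := by
    calc eLpNorm (fun t : ℝ => g (2 * t)) 2 volume
        = eLpNorm (⇑g) 2 (Measure.map (fun t : ℝ => 2 * t) volume) :=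
          (hme.eLpNorm_map_measure).symm
      _ ≤ eLpNorm (⇑g) 2 volume := by
          apply eLpNorm_mono_measure
          rw [show (fun t : ℝ => 2 * t) = ((2:ℝ) * ·) from rfl,
            Real.map_volume_mul_left two_ne_zero]
          refine Measure.le_iff'.mpr fun s => ?_
          rw [Measure.smul_apply, smul_eq_mul]
          calc ENNReal.ofReal |(2:ℝ)⁻¹| * volume s ≤ 1 * volume s := by
                gcongr
                rw [ENNReal.ofReal_le_one]
                rw [abs_of_nonneg (by norm_num : (0:ℝ) ≤ 2⁻¹)]
                norm_num
            _ = volume s := one_mul _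
  calc eLpNorm (fun t : ℝ => ((Real.sqrt 2 : ℝ) : ℂ) * g (2 * t)) 2 volume
      = eLpNorm (((Real.sqrt 2 : ℝ) : ℂ) • fun t : ℝ => g (2 * t)) 2 volume := rfl
    _ ≤ (‖((Real.sqrt 2 : ℝ) : ℂ)‖₊ : ℝ≥0∞) * eLpNorm (fun t : ℝ => g (2 * t)) 2 volume :=
          eLpNorm_const_smul_le
    _ ≤ _ := by gcongr

/-- The dilation operator `g ↦ √2 g(2·)` as a linear map on `L²(ℝ)`. -/
def dilL : L2R →ₗ[ℂ] L2R where
  toFun g := (memLp_dil g).toLp _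
  map_add' g h := by
    apply Lp.ext
    filter_upwards [(memLp_dil g).coeFn_toLp, (memLp_dil h).coeFn_toLp,
      (memLp_dil (g + h)).coeFn_toLp,
      Lp.coeFn_add ((memLp_dil g).toLp _) ((memLp_dil h).toLp _),
      qmp_two.ae_eq (Lp.coeFn_add g h)] with t h1 h2 h3 h4 h5
    simp only [Function.comp] at h5
    rw [h3, h4, Pi.add_apply, h1, h2]
    simp only [h5, Pi.add_apply, mul_add]
  map_smul' c g := by
    apply Lp.ext
    filter_upwards [(memLp_dil g).coeFn_toLp, (memLp_dil (c • g)).coeFn_toLp,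
      Lp.coeFn_smul c ((memLp_dil g).toLp _),
      qmp_two.ae_eq (Lp.coeFn_smul c g)] with t h1 h2 h3 h4
    simp only [Function.comp] at h4
    rw [RingHom.id_apply, h2, h3, Pi.smul_apply, h1]
    simp only [h4, Pi.smul_apply, smul_eq_mul]
    ring

/-- The dilation operator `g ↦ √2 g(2·)` as a continuous linear map on `L²(ℝ)`. -/
def dilCLM : L2R →L[ℂ] L2R :=
  dilL.mkContinuous ‖((Real.sqrt 2 : ℝ) : ℂ)‖ (fun g => by
    rw [show dilL g = (memLp_dil g).toLp _ from rfl, Lp.norm_toLp, Lp.norm_def]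
    have h := eLpNorm_dil_le g
    have hfin : (‖((Real.sqrt 2 : ℝ) : ℂ)‖₊ : ℝ≥0∞) * eLpNorm (⇑g) 2 volume ≠ ∞ :=
      ENNReal.mul_ne_top (by finiteness) (Lp.eLpNorm_ne_top g)
    calc (eLpNorm _ 2 volume).toReal
        ≤ ((‖((Real.sqrt 2 : ℝ) : ℂ)‖₊ : ℝ≥0∞) * eLpNorm (⇑g) 2 volume).toReal :=
          ENNReal.toReal_mono hfin h
      _ = ‖((Real.sqrt 2 : ℝ) : ℂ)‖ * (eLpNorm (⇑g) 2 volume).toReal := by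
          rw [ENNReal.toReal_mul]
          simp)

lemma dilCLM_coe (g : L2R) :
    ⇑(dilCLM g) =ᵐ[volume] fun t : ℝ => ((Real.sqrt 2 : ℝ) : ℂ) * g (2 * t) :=
  (memLp_dil g).coeFn_toLp

lemma norm_expo (n : ℤ) (t : ℝ) :
    ‖Complex.exp (-(Complex.I * (n : ℂ) * (t : ℝ)))‖ = 1 := by
  rw [Complex.norm_exp]
  have : (-(Complex.I * (n : ℂ) * ((t : ℝ) : ℂ))).re = 0 := by simp
  rw [this, Real.exp_zero]

lemma memLp_mod (n : ℤ) (g : L2R) :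
    MemLp (fun t : ℝ => Complex.exp (-(Complex.I * (n : ℂ) * (t : ℝ))) * g t) 2 volume := by
  have hc : Continuous fun t : ℝ => Complex.exp (-(Complex.I * (n : ℂ) * (t : ℝ))) := by
    continuity
  constructor
  · exact hc.aestronglyMeasurable.mul (Lp.aestronglyMeasurable g)
  · have he : eLpNorm (fun t : ℝ => Complex.exp (-(Complex.I * (n : ℂ) * (t : ℝ))) * g t)
        2 volume = eLpNorm (⇑g) 2 volume :=
      eLpNorm_congr_norm_ae (ae_of_all _ fun t => by rw [norm_mul, norm_expo, one_mul])
    rw [he]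
    exact Lp.eLpNorm_lt_top g

/-- The modulation operator `g ↦ e^{-int} g(t)` as a linear map on `L²(ℝ)`. -/
def modL (n : ℤ) : L2R →ₗ[ℂ] L2R where
  toFun g := (memLp_mod n g).toLp _
  map_add' g h := by
    apply Lp.ext
    filter_upwards [(memLp_mod n g).coeFn_toLp, (memLp_mod n h).coeFn_toLp,
      (memLp_mod n (g + h)).coeFn_toLp,
      Lp.coeFn_add ((memLp_mod n g).toLp _) ((memLp_mod n h).toLp _),
      Lp.coeFn_add g h] with t h1 h2 h3 h4 h5
    rw [h3, h4, Pi.add_apply, h1, h2, h5, Pi.add_apply, mul_add]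
  map_smul' c g := by
    apply Lp.ext
    filter_upwards [(memLp_mod n g).coeFn_toLp, (memLp_mod n (c • g)).coeFn_toLp,
      Lp.coeFn_smul c ((memLp_mod n g).toLp _),
      Lp.coeFn_smul c g] with t h1 h2 h3 h4
    rw [RingHom.id_apply, h2, h3, Pi.smul_apply, h1, h4, Pi.smul_apply,
      smul_eq_mul, smul_eq_mul]
    ring

/-- The modulation operator as a continuous linear map on `L²(ℝ)`. -/
def modCLM (n : ℤ) : L2R →L[ℂ] L2R :=
  (modL n).mkContinuous 1 (fun g => by
    have he : eLpNorm (fun t : ℝ => Complex.exp (-(Complex.I * (n : ℂ) * (t : ℝ))) * g t)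
        2 volume = eLpNorm (⇑g) 2 volume :=
      eLpNorm_congr_norm_ae (ae_of_all _ fun t => by rw [norm_mul, norm_expo, one_mul])
    rw [show modL n g = (memLp_mod n g).toLp _ from rfl, Lp.norm_toLp, he, one_mul,
      Lp.norm_def])

lemma modCLM_coe (n : ℤ) (g : L2R) :
    ⇑(modCLM n g) =ᵐ[volume]
      fun t : ℝ => Complex.exp (-(Complex.I * (n : ℂ) * (t : ℝ))) * g t :=
  (memLp_mod n g).coeFn_toLp

/-- Two continuous maps on `L²(ℝ)` agreeing on integrable functions agree everywhere. -/
lemma eqOn_integrable (A B : L2R → L2R) (hA : Continuous A) (hB : Continuous B)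
    (h : ∀ f : L2R, Integrable (⇑f) volume → A f = B f) : ∀ f : L2R, A f = B f := by
  have hdense : Dense (Lp.simpleFunc ℂ 2 (volume : Measure ℝ) : Set L2R) :=
    Lp.simpleFunc.dense (by norm_num)
  have hs : Set.EqOn A B (Lp.simpleFunc ℂ 2 (volume : Measure ℝ) : Set L2R) := by
    intro g hg
    apply h
    have h1 : Integrable
        (Lp.simpleFunc.toSimpleFunc (⟨g, hg⟩ : Lp.simpleFunc ℂ 2 (volume : Measure ℝ)))
        volume := by
      rw [SimpleFunc.integrable_iff]
      exact fun y hy =>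
        (SimpleFunc.memLp_iff (by norm_num) (by norm_num)).mp
          (Lp.simpleFunc.memLp _) y hy
    exact h1.congr (Lp.simpleFunc.toSimpleFunc_eq_toFun _)
  exact fun f => congrFun (Continuous.ext_on hdense hA hB hs) f

lemma fourier_eq (n : ℤ) (x : ℝ) :
    fourier n ((x : ℝ) : Circle2π) = Complex.exp (Complex.I * (n : ℂ) * (x : ℝ)) := by
  rw [fourier_coe_apply]
  congr 1
  have hπ : ((π : ℝ) : ℂ) ≠ 0 := by exact_mod_cast Real.pi_ne_zero
  push_cast
  field_simp

lemma two_smul_mk (t : ℝ) :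
    (2 : ℕ) • ((t : ℝ) : Circle2π) = ((2 * t : ℝ) : Circle2π) := by
  rw [two_smul, show (2 * t : ℝ) = t + t from two_mul t]
  exact (QuotientAddGroup.mk_add (AddSubgroup.zmultiples (2 * π)) t t).symm

end WaveAux

/-- **Corollary 7.2.** For a scale-2 father function `φ` with low-pass filter `m₀`, the
isometry `(S₀ξ)(z) = m₀(z) ξ(z²)` on `L²(𝕋)` is the compression
`S₀ = M_φ̂* F U F⁻¹ M_φ̂` of the scaling operator `(Uξ)(x) = 2^{-1/2} ξ(x/2)`. -/
theorem filter_isometry_is_compression_of_scaling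
    -- the father function φ and its translates φ(· - k)
    (φ : ℝ → ℂ) (hφ_mem : MemLp φ 2 (volume : Measure ℝ))
    (φL : ℤ → L2R) (hφL : ∀ k : ℤ, ⇑(φL k) =ᵐ[volume] fun x => φ (x - (k : ℝ)))
    -- the translates are orthonormal
    (horth : Orthonormal ℂ φL)
    -- the scaling unitary (Uξ)(x) = 2^{-1/2} ξ(x/2)
    (U : L2R ≃ₗᵢ[ℂ] L2R)
    (hU : ∀ ξ : L2R, ⇑(U ξ) =ᵐ[volume] fun x => ((Real.sqrt 2 : ℂ))⁻¹ * ξ (x / 2))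
    -- multiresolution axioms: Uφ ∈ V₀, ⋂ₙ Uⁿ V₀ = {0}, ⋃ₙ Uⁿ V₀ dense
    (hrefine : U (φL 0) ∈ spanTranslates φL)
    (hsep : (⨅ n : ℤ, dilSubspace U (spanTranslates φL) n) = ⊥)
    (hdense : (⨆ n : ℤ, dilSubspace U (spanTranslates φL) n).topologicalClosure = ⊤)
    -- the Plancherel Fourier transform F, with the paper's normalization
    (F : L2R ≃ₗᵢ[ℂ] L2R)
    (hF : ∀ f : L2R, Integrable ⇑f volume →
      ⇑(F f) =ᵐ[volume] fun t : ℝ =>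
        ((Real.sqrt (2 * Real.pi) : ℂ))⁻¹ * ∫ x : ℝ, Complex.exp (-(Complex.I * x * t)) * f x)
    -- φ̂ = F φ
    (φhat : ℝ → ℂ) (hφhat : ⇑(F (φL 0)) =ᵐ[volume] φhat)
    -- the low-pass filter m₀ : √2 φ̂(2t) = m₀(e^{-it}) φ̂(t) a.e.
    (m0 : Circle2π → ℂ) (hm0_mem : MemLp m0 2 haarT)
    (hm0 : ∀ᵐ t ∂(volume : Measure ℝ),
      (Real.sqrt 2 : ℂ) * φhat (2 * t) = m0 (t : Circle2π) * φhat t)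
    -- the operator S₀ on L²(𝕋)
    (S0 : HT →L[ℂ] HT)
    (hS0 : ∀ ξ : HT, ⇑(S0 ξ) =ᵐ[haarT] fun z => m0 z * ξ (2 • z))
    -- the isometry M_φ̂ : L²(𝕋) → L²(ℝ), (M_φ̂ ξ)(t) = φ̂(t) ξ(e^{-it})
    (Mφ : HT →L[ℂ] L2R)
    (hMφ : ∀ ξ : HT, ⇑(Mφ ξ) =ᵐ[volume] fun t : ℝ => φhat t * ξ (t : Circle2π)) :
    ∀ ξ : HT, S0 ξ = (ContinuousLinearMap.adjoint Mφ) (F (U (F.symm (Mφ ξ)))) := by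
  classical
  -- integrability of x ↦ f (x/2)
  have intHalf : ∀ f : L2R, Integrable (⇑f) volume →
      Integrable (fun x : ℝ => f (x / 2)) volume := by
    intro f hf
    have hme : MeasurableEmbedding (fun x : ℝ => 2⁻¹ * x) :=
      (Homeomorph.mulLeft₀ (2⁻¹ : ℝ) (by norm_num)).measurableEmbedding
    have h1 : Integrable (⇑f) (Measure.map (fun x : ℝ => 2⁻¹ * x) volume) := by
      rw [show (fun x : ℝ => 2⁻¹ * x) = ((2⁻¹:ℝ) * ·) from rfl,
        Real.map_volume_mul_left (by norm_num : (2⁻¹:ℝ) ≠ 0)]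
      exact hf.smul_measure (by finiteness)
    have h2 : Integrable (⇑f ∘ fun x : ℝ => 2⁻¹ * x) volume :=
      hme.integrable_map_iff.mp h1
    have h3 : (fun x : ℝ => f (x / 2)) = (⇑f ∘ fun x : ℝ => 2⁻¹ * x) := by
      funext x; simp [Function.comp, div_eq_inv_mul]
    rw [h3]; exact h2
  -- Claim 2 : F U = dilCLM F
  have claim2 : ∀ f : L2R, F (U f) = WaveAux.dilCLM (F f) := by
    refine WaveAux.eqOn_integrable _ _ (F.continuous.comp U.continuous)
      (WaveAux.dilCLM.continuous.comp F.continuous) ?_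
    intro f hf
    have hUf := hU f
    have hintU : Integrable (⇑(U f)) volume :=
      ((intHalf f hf).const_mul _).congr hUf.symm
    have h22 : ((Real.sqrt 2 : ℝ) : ℂ) * ((Real.sqrt 2 : ℝ) : ℂ) = 2 := by
      rw [← Complex.ofReal_mul, Real.mul_self_sqrt (by norm_num : (0:ℝ) ≤ 2)]
      norm_num
    have hs2 : ((Real.sqrt 2 : ℝ) : ℂ) ≠ 0 :=
      Complex.ofReal_ne_zero.mpr (Real.sqrt_ne_zero'.mpr (by norm_num))
    have h2s : (2:ℂ) * ((Real.sqrt 2 : ℂ))⁻¹ = (Real.sqrt 2 : ℂ) := by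
      rw [← h22, mul_assoc, mul_inv_cancel₀ hs2, mul_one]
    have key : ∀ t : ℝ, (∫ x : ℝ, Complex.exp (-(Complex.I * x * t)) * (U f) x)
        = (Real.sqrt 2 : ℂ) * ∫ x : ℝ, Complex.exp (-(Complex.I * x * ((2 * t : ℝ) : ℂ))) * f x := by
      intro t
      have e1 : (∫ x : ℝ, Complex.exp (-(Complex.I * x * t)) * (U f) x)
          = ∫ x : ℝ, Complex.exp (-(Complex.I * x * t)) * (((Real.sqrt 2 : ℂ))⁻¹ * f (x / 2)) :=
        integral_congr_ae (hUf.mono fun x hx => by dsimp only at hx ⊢; rw [hx])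
      have e2 : (fun x : ℝ => Complex.exp (-(Complex.I * x * t)) * (((Real.sqrt 2 : ℂ))⁻¹ * f (x / 2)))
          = fun x : ℝ => (fun y : ℝ =>
              ((Real.sqrt 2 : ℂ))⁻¹ * (Complex.exp (-(Complex.I * y * ((2 * t : ℝ) : ℂ))) * f y)) (x / 2) := by
        funext x
        dsimp only
        rw [show (-(Complex.I * ((x/2 : ℝ) : ℂ) * ((2 * t : ℝ) : ℂ)))
            = -(Complex.I * (x:ℝ) * (t:ℝ)) by push_cast; ring]
        ring
      rw [e1, e2, MeasureTheory.Measure.integral_comp_div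
        (fun y : ℝ => ((Real.sqrt 2 : ℂ))⁻¹ *
          (Complex.exp (-(Complex.I * y * ((2 * t : ℝ) : ℂ))) * f y)) 2]
      rw [integral_const_mul, show |(2:ℝ)| = 2 by norm_num, Complex.real_smul,
        Complex.ofReal_ofNat, ← mul_assoc, h2s]
    apply Lp.ext
    have hpull : (fun t : ℝ => (F f) (2 * t)) =ᵐ[volume]
        fun t : ℝ => ((Real.sqrt (2 * Real.pi) : ℂ))⁻¹ *
          ∫ x : ℝ, Complex.exp (-(Complex.I * x * ((2 * t : ℝ) : ℂ))) * f x := by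
      filter_upwards [WaveAux.qmp_two.ae_eq (hF f hf)] with t ht
      simpa only [Function.comp_apply] using ht
    filter_upwards [hF (U f) hintU, WaveAux.dilCLM_coe (F f), hpull] with t h1 h2 h3
    rw [h1, h2, h3, key t]
    ring
  -- Claim 1 : Fourier transform of the translates
  have claim1 : ∀ n : ℤ, ⇑(F (φL n)) =ᵐ[volume]
      fun t : ℝ => Complex.exp (-(Complex.I * (n:ℂ) * (t:ℝ))) * φhat t := by
    intro n
    have hmp : MeasurePreserving (fun x : ℝ => x - (n:ℝ)) volume volume :=
      measurePreserving_sub_right volume (n:ℝ)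
    have hτcont : Continuous fun g : L2R =>
        Lp.compMeasurePreserving (fun x : ℝ => x - (n:ℝ)) hmp g :=
      (Lp.isometry_compMeasurePreserving (p := 2) (E := ℂ) hmp).continuous
    have hτcoe : ∀ g : L2R,
        ⇑(Lp.compMeasurePreserving (fun x : ℝ => x - (n:ℝ)) hmp g) =ᵐ[volume]
          fun x : ℝ => g (x - (n:ℝ)) := by
      intro g
      have := Lp.coeFn_compMeasurePreserving g hmp
      simpa [Function.comp_def] using this
    have hcl : ∀ f : L2R,
        F (Lp.compMeasurePreserving (fun x : ℝ => x - (n:ℝ)) hmp f)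
          = WaveAux.modCLM n (F f) := by
      refine WaveAux.eqOn_integrable _ _ (F.continuous.comp hτcont)
        ((WaveAux.modCLM n).continuous.comp F.continuous) ?_
      intro f hf
      have hτf := hτcoe f
      have hint : Integrable
          (⇑(Lp.compMeasurePreserving (fun x : ℝ => x - (n:ℝ)) hmp f)) volume := by
        have h1 : Integrable (⇑f ∘ fun x : ℝ => x - (n:ℝ)) volume :=
          (hmp.integrable_comp (Lp.aestronglyMeasurable f)).mpr hf
        exact h1.congr (Lp.coeFn_compMeasurePreserving f hmp).symm
      have key : ∀ t : ℝ, (∫ x : ℝ, Complex.exp (-(Complex.I * x * t)) *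
            (Lp.compMeasurePreserving (fun x : ℝ => x - (n:ℝ)) hmp f) x)
          = Complex.exp (-(Complex.I * (n:ℂ) * (t:ℝ))) *
            ∫ x : ℝ, Complex.exp (-(Complex.I * x * t)) * f x := by
        intro t
        have e1 : (∫ x : ℝ, Complex.exp (-(Complex.I * x * t)) *
              (Lp.compMeasurePreserving (fun x : ℝ => x - (n:ℝ)) hmp f) x)
            = ∫ x : ℝ, Complex.exp (-(Complex.I * x * t)) * f (x - (n:ℝ)) :=
          integral_congr_ae (hτf.mono fun x hx => by dsimp only at hx ⊢; rw [hx])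
        have e2 : (fun x : ℝ => Complex.exp (-(Complex.I * x * t)) * f (x - (n:ℝ)))
            = fun x : ℝ => (fun y : ℝ =>
                Complex.exp (-(Complex.I * ((y + (n:ℝ) : ℝ) : ℂ) * t)) * f y) (x - (n:ℝ)) := by
          funext x
          dsimp only
          rw [show (x - (n:ℝ)) + (n:ℝ) = x by ring]
        have e3 : ∀ y : ℝ, Complex.exp (-(Complex.I * ((y + (n:ℝ) : ℝ) : ℂ) * t)) * f y
            = Complex.exp (-(Complex.I * (n:ℂ) * (t:ℝ))) *
              (Complex.exp (-(Complex.I * y * t)) * f y) := by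
          intro y
          rw [show (-(Complex.I * ((y + (n:ℝ) : ℝ) : ℂ) * (t:ℝ)))
              = -(Complex.I * (n:ℂ) * (t:ℝ)) + -(Complex.I * (y:ℝ) * (t:ℝ)) by push_cast; ring,
            Complex.exp_add]
          ring
        rw [e1, e2, integral_sub_right_eq_self (fun y : ℝ =>
            Complex.exp (-(Complex.I * ((y + (n:ℝ) : ℝ) : ℂ) * t)) * f y) (n:ℝ)]
        rw [integral_congr_ae (Filter.Eventually.of_forall e3), integral_const_mul]
      apply Lp.ext
      filter_upwards [hF _ hint, WaveAux.modCLM_coe n (F f), hF f hf] with t h1 h2 h3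
      rw [h1, h2, h3, key t]
      ring
    have hτφ : Lp.compMeasurePreserving (fun x : ℝ => x - (n:ℝ)) hmp (φL 0) = φL n := by
      apply Lp.ext
      have h2 : (fun x : ℝ => (φL 0) (x - (n:ℝ))) =ᵐ[volume]
          fun x : ℝ => φ (x - (n:ℝ) - ((0:ℤ):ℝ)) := by
        have := hmp.quasiMeasurePreserving.ae_eq (hφL 0)
        simpa [Function.comp_def] using this
      filter_upwards [hτcoe (φL 0), h2, hφL n] with x hx1 hx2 hx3
      rw [hx1, hx2, hx3]
      norm_num
    have hres := hcl (φL 0)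
    rw [hτφ] at hres
    rw [hres]
    filter_upwards [WaveAux.modCLM_coe n (F (φL 0)), hφhat] with t h1 h2
    rw [h1, h2]
  -- the Fourier basis of L²(𝕋)
  have hb : ∀ n : ℤ, (fourierBasis (T := 2 * Real.pi)) n = fourierLp 2 n := fun n =>
    congrFun coe_fourierBasis n
  set b : HilbertBasis ℤ ℂ HT := fourierBasis (T := 2 * Real.pi) with hbdef
  have hbcoe : ∀ n : ℤ, ⇑(b n) =ᵐ[haarT] fourier n := fun n => by
    rw [hbdef, hb n]; exact coeFn_fourierLp 2 n
  have keyM : ∀ n : ℤ, Mφ (b n) = F (φL (-n)) := by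
    intro n
    apply Lp.ext
    have h2 : (fun t : ℝ => (b n) ((t:ℝ) : Circle2π)) =ᵐ[volume]
        fun t : ℝ => Complex.exp (Complex.I * (n:ℂ) * (t:ℝ)) := by
      have h := WaveAux.qmp_mk.ae_eq (hbcoe n)
      filter_upwards [h] with t ht
      simp only [Function.comp] at ht
      rw [ht, WaveAux.fourier_eq]
    filter_upwards [hMφ (b n), h2, claim1 (-n)] with t ht1 ht2 ht3
    rw [ht1, ht2, ht3,
      show (-(Complex.I * ((-n : ℤ):ℂ) * (t:ℝ))) = Complex.I * (n:ℂ) * (t:ℝ) by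
        push_cast; ring]
    ring
  have horthM : ∀ m k : ℤ, (inner ℂ (Mφ (b m)) (Mφ (b k)) : ℂ) = if m = k then 1 else 0 := by
    intro m k
    rw [keyM m, keyM k, LinearIsometryEquiv.inner_map_map,
      orthonormal_iff_ite.mp horth (-m) (-k)]
    simp [neg_inj]
  have hdspan : Dense ((Submodule.span ℂ (Set.range ⇑b) : Submodule ℂ HT) : Set HT) :=
    Submodule.dense_iff_topologicalClosure_eq_top.mpr b.dense_span
  have innerEq : ∀ (k : ℤ) (ζ : HT), (inner ℂ (Mφ (b k)) (Mφ ζ) : ℂ) = (inner ℂ (b k) ζ : ℂ) := by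
    intro k
    have hext : (innerSL ℂ (Mφ (b k))).comp Mφ = innerSL ℂ (b k) := by
      refine ContinuousLinearMap.ext_on hdspan ?_
      rintro x ⟨m, rfl⟩
      simp only [ContinuousLinearMap.comp_apply, innerSL_apply_apply]
      rw [horthM k m, orthonormal_iff_ite.mp b.orthonormal k m]
    intro ζ
    exact DFunLike.congr_fun hext ζ
  have isom : ∀ ζ : HT, (ContinuousLinearMap.adjoint Mφ) (Mφ ζ) = ζ := by
    intro ζ
    refine hdspan.eq_of_inner_right ℂ ?_
    rintro v hv
    induction hv using Submodule.span_induction with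
    | mem x hx =>
        obtain ⟨m, rfl⟩ := hx
        rw [ContinuousLinearMap.adjoint_inner_right, innerEq m ζ]
    | zero => simp
    | add x y hx hy ihx ihy => rw [inner_add_left, inner_add_left, ihx, ihy]
    | smul c x hx ih => rw [inner_smul_left, inner_smul_left, ih]
  -- conclusion
  intro ξ
  have main : F (U (F.symm (Mφ ξ))) = Mφ (S0 ξ) := by
    rw [claim2 (F.symm (Mφ ξ)), LinearIsometryEquiv.apply_symm_apply]
    apply Lp.ext
    have h2 : (fun t : ℝ => (Mφ ξ) (2 * t)) =ᵐ[volume]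
        fun t : ℝ => φhat (2 * t) * ξ ((2 * t : ℝ) : Circle2π) := by
      have := WaveAux.qmp_two.ae_eq (hMφ ξ)
      simpa [Function.comp_def] using this
    have h4 : (fun t : ℝ => (S0 ξ) ((t : ℝ) : Circle2π)) =ᵐ[volume]
        fun t : ℝ => m0 ((t:ℝ) : Circle2π) * ξ ((2:ℕ) • ((t:ℝ) : Circle2π)) := by
      have := WaveAux.qmp_mk.ae_eq (hS0 ξ)
      simpa [Function.comp_def] using this
    filter_upwards [WaveAux.dilCLM_coe (Mφ ξ), h2, hMφ (S0 ξ), h4, hm0]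
      with t ht1 ht2 ht3 ht4 ht5
    rw [ht1, ht2, ht3, ht4, WaveAux.two_smul_mk, ← mul_assoc, ht5]
    ring
  rw [main, isom (S0 ξ)]
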